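/- Let ω_1 ≤ ω_2 ≤ … ≤ ω_N be real numbers, on a symmetric connected network. Then Σ_{i=2}^N Σ_{j=1,…,i−1 with ψ_{ij}>0} (ω_j − ω_i) ≤ −(ω_N − ω_1), and Σ_{i=1}^{N−1} Σ_{j=i+1,…,N with ψ_{ij}>0} (ω_j − ω_i) ≥ ω_N − ω_1. -/

import Mathlib

open Real Finset

/-- Diameter: max minus min of a finite family of reals. -/
noncomputable def diam {N : ℕ} (v : Fin N → ℝ) : ℝ := (⨆ i, v i) - (⨅ i, v i)

/-- `S_c = Σ_{n=0}^{N-1} c^n`. -/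
noncomputable def Sc (N : ℕ) (c : ℝ) : ℝ := ∑ n ∈ Finset.range N, c ^ n

/-- `Y_c(z)`: difference of the two convex-type combinations of the nondecreasing
rearrangement of `z` (weights `c^{i-1}` and `c^{N-i}`), divided by `S_c`. -/
noncomputable def Yc {N : ℕ} (c : ℝ) (z : Fin N → ℝ) : ℝ :=
  (∑ i : Fin N, c ^ (i : ℕ) * z (Tuple.sort z i) -
   ∑ i : Fin N, c ^ (N - 1 - (i : ℕ)) * z (Tuple.sort z i)) / Sc N c

/-- The interaction graph: `i` and `j` adjacent iff `i ≠ j` and the (symmetric) weight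
`ψ i j` is positive. -/
def netGraph {N : ℕ} (ψ : Fin N → Fin N → ℝ) : SimpleGraph (Fin N) where
  Adj i j := i ≠ j ∧ 0 < ψ i j ∧ 0 < ψ j i
  symm := ⟨fun _ _ h => ⟨h.1.symm, h.2.2, h.2.1⟩⟩
  loopless := ⟨fun _ h => h.1 rfl⟩

/-- Crossing-edge lemma: any walk from below a cut to above it uses a crossing edge. -/
lemma cross_of_walk {N : ℕ} (ψ : Fin N → Fin N → ℝ) {k : ℕ}
    {u v : Fin N} (w : (netGraph ψ).Walk u v) :
    u.val ≤ k → k < v.val → ∃ i j : Fin N, i.val ≤ k ∧ k < j.val ∧ 0 < ψ i j := by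
  induction w with
  | nil => intro h1 h2; omega
  | @cons a c d h p ih =>
    intro h1 h2
    by_cases hc : c.val ≤ k
    · exact ih hc h2
    · exact ⟨a, c, h1, by omega, h.2.1⟩

/-- key dissipation estimate for ordered frequencies on a connected network. -/
theorem stmt6 {N : ℕ} (hN : 2 ≤ N) (ω : Fin N → ℝ) (hmono : Monotone ω)
    (ψ : Fin N → Fin N → ℝ) (hψsym : ∀ i j, ψ i j = ψ j i) (hψnn : ∀ i j, 0 ≤ ψ i j)
    (hconn : (netGraph ψ).Connected) :
    (∑ i : Fin N, ∑ j ∈ Finset.univ.filter (fun j => j < i ∧ 0 < ψ i j), (ω j - ω i))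
      ≤ - (ω ⟨N - 1, by omega⟩ - ω ⟨0, by omega⟩) ∧
    ω ⟨N - 1, by omega⟩ - ω ⟨0, by omega⟩ ≤
      ∑ i : Fin N, ∑ j ∈ Finset.univ.filter (fun j => i < j ∧ 0 < ψ i j), (ω j - ω i) := by
  have hN0 : 0 < N := by omega
  set a : Fin N := ⟨0, by omega⟩ with ha
  set b : Fin N := ⟨N - 1, by omega⟩ with hb
  -- extended function
  set g : ℕ → ℝ := fun k => ω ⟨min k (N - 1), by omega⟩ with hg
  have hgmono : Monotone g := by
    intro m n hmn
    exact hmono (by simp only [Fin.mk_le_mk]; omega)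
  have hgval : ∀ i : Fin N, g i.val = ω i := by
    intro i
    have : min i.val (N - 1) = i.val := by omega
    simp only [hg, this]
  -- telescoping over Ico
  have htel : ∀ m n : ℕ, m ≤ n → ∑ k ∈ Finset.Ico m n, (g (k + 1) - g k) = g n - g m := by
    intro m n hmn
    rw [Finset.sum_Ico_eq_sub _ hmn, Finset.sum_range_sub, Finset.sum_range_sub]
    ring
  -- key inequality
  have key : ω b - ω a ≤
      ∑ i : Fin N, ∑ j ∈ Finset.univ.filter (fun j => i < j ∧ 0 < ψ i j), (ω j - ω i) := by
    have step1 : ∀ i : Fin N, ∑ j ∈ Finset.univ.filter (fun j => i < j ∧ 0 < ψ i j), (ω j - ω i)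
        = ∑ j : Fin N, ∑ k ∈ Finset.range (N - 1),
            (if i < j ∧ 0 < ψ i j ∧ i.val ≤ k ∧ k < j.val then g (k + 1) - g k else 0) := by
      intro i
      rw [Finset.sum_filter]
      refine Finset.sum_congr rfl fun j _ => ?_
      by_cases hij : i < j ∧ 0 < ψ i j
      · rw [if_pos hij, ← Finset.sum_filter]
        have hset : (Finset.range (N - 1)).filter
            (fun k => i < j ∧ 0 < ψ i j ∧ i.val ≤ k ∧ k < j.val) = Finset.Ico i.val j.val := by
          ext k
          simp only [Finset.mem_filter, Finset.mem_range, Finset.mem_Ico]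
          have hj : j.val < N := j.isLt
          constructor
          · rintro ⟨_, _, _, h3, h4⟩; exact ⟨h3, h4⟩
          · rintro ⟨h3, h4⟩; exact ⟨by omega, hij.1, hij.2, h3, h4⟩
        rw [hset, htel _ _ (Fin.lt_def.mp hij.1).le, hgval, hgval]
      · rw [if_neg hij]
        symm
        refine Finset.sum_eq_zero fun k _ => ?_
        rw [if_neg (by tauto)]
    have step2 : (∑ i : Fin N, ∑ j ∈ Finset.univ.filter (fun j => i < j ∧ 0 < ψ i j), (ω j - ω i))
        = ∑ k ∈ Finset.range (N - 1), ∑ i : Fin N, ∑ j : Fin N,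
            (if i < j ∧ 0 < ψ i j ∧ i.val ≤ k ∧ k < j.val then g (k + 1) - g k else 0) := by
      simp only [step1]
      rw [show (∑ i : Fin N, ∑ j : Fin N, ∑ k ∈ Finset.range (N - 1),
            (if i < j ∧ 0 < ψ i j ∧ i.val ≤ k ∧ k < j.val then g (k + 1) - g k else 0))
          = ∑ i : Fin N, ∑ k ∈ Finset.range (N - 1), ∑ j : Fin N,
            (if i < j ∧ 0 < ψ i j ∧ i.val ≤ k ∧ k < j.val then g (k + 1) - g k else 0)
          from Finset.sum_congr rfl fun i _ => Finset.sum_comm]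
      exact Finset.sum_comm
    have step3 : ω b - ω a = ∑ k ∈ Finset.range (N - 1), (g (k + 1) - g k) := by
      rw [Finset.sum_range_sub]
      have h1 : g (N - 1) = ω b := hgval b
      have h2 : g 0 = ω a := hgval a
      rw [h1, h2]
    rw [step2, step3]
    refine Finset.sum_le_sum fun k hk => ?_
    have hk' : k < N - 1 := Finset.mem_range.mp hk
    obtain ⟨w⟩ := hconn.preconnected a b
    obtain ⟨i0, j0, hi0, hj0, hψ0⟩ := cross_of_walk ψ w (Nat.zero_le k) (show k < N - 1 from hk')
    have hij0 : i0 < j0 := Fin.lt_def.mpr (by omega)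
    have hd : 0 ≤ g (k + 1) - g k := sub_nonneg.mpr (hgmono (Nat.le_succ k))
    have hnn : ∀ (i j : Fin N),
        0 ≤ (if i < j ∧ 0 < ψ i j ∧ i.val ≤ k ∧ k < j.val then g (k + 1) - g k else 0) := by
      intro i j; split_ifs <;> simp [hd]
    calc g (k + 1) - g k
        = (if i0 < j0 ∧ 0 < ψ i0 j0 ∧ i0.val ≤ k ∧ k < j0.val then g (k + 1) - g k else 0) := by
          rw [if_pos ⟨hij0, hψ0, hi0, hj0⟩]
      _ ≤ ∑ j : Fin N,
            (if i0 < j ∧ 0 < ψ i0 j ∧ i0.val ≤ k ∧ k < j.val then g (k + 1) - g k else 0) :=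
          Finset.single_le_sum (fun j _ => hnn i0 j) (Finset.mem_univ j0)
      _ ≤ ∑ i : Fin N, ∑ j : Fin N,
            (if i < j ∧ 0 < ψ i j ∧ i.val ≤ k ∧ k < j.val then g (k + 1) - g k else 0) :=
          Finset.single_le_sum
            (fun i _ => Finset.sum_nonneg fun j _ => hnn i j) (Finset.mem_univ i0)
  have sym : (∑ i : Fin N, ∑ j ∈ Finset.univ.filter (fun j => j < i ∧ 0 < ψ i j), (ω j - ω i))
      = -(∑ i : Fin N, ∑ j ∈ Finset.univ.filter (fun j => i < j ∧ 0 < ψ i j), (ω j - ω i)) := by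
    simp only [Finset.sum_filter]
    rw [Finset.sum_comm, ← Finset.sum_neg_distrib]
    refine Finset.sum_congr rfl fun i _ => ?_
    rw [← Finset.sum_neg_distrib]
    refine Finset.sum_congr rfl fun j _ => ?_
    rw [hψsym]
    split_ifs <;> ring
  exact ⟨by rw [sym]; linarith, key⟩
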